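/- Let ε ∈ (0,1), δ ∈ (0,1), Δ > 0, and set σ = (Δ/ε)·√(2·ln(1.25/δ)). Then for all real numbers a, b with |a − b| ≤ Δ: Φ(a/σ) ≤ e^{ε}·Φ(b/σ) + δ and 1 − Φ(a/σ) ≤ e^{ε}·(1 − Φ(b/σ)) + δ, where Φ is the standard normal CDF. -/

import Mathlib

open MeasureTheory

/-- The standard normal CDF `Φ(x) = ∫_{-∞}^{x} e^{-t²/2}/√(2π) dt`. -/
noncomputable def stdGaussianCDF (x : ℝ) : ℝ :=
  (∫ t in Set.Iic x, Real.exp (-(t ^ 2) / 2)) / Real.sqrt (2 * Real.pi)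

namespace StmtAux

open Set Real

noncomputable def g (t : ℝ) : ℝ := Real.exp (-(t ^ 2) / 2)

lemma g_nonneg (t : ℝ) : 0 ≤ g t := (Real.exp_pos _).le

lemma g_cont : Continuous g := by unfold g; fun_prop

lemma g_le_one (t : ℝ) : g t ≤ 1 := by
  rw [g, show (1:ℝ) = Real.exp 0 from (Real.exp_zero).symm]
  apply Real.exp_le_exp.mpr
  nlinarith [sq_nonneg t]

lemma g_eq : g = fun t => Real.exp (-(1/2 : ℝ) * t ^ 2) := by
  funext t; rw [g]; ring_nf

lemma g_int : Integrable g := by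
  rw [g_eq]; exact integrable_exp_neg_mul_sq (by norm_num)

lemma g_total : ∫ t, g t = Real.sqrt (2 * π) := by
  rw [g_eq, integral_gaussian, show π / (1/2 : ℝ) = 2 * π by ring]

noncomputable def I (x : ℝ) : ℝ := ∫ t in Set.Iic x, g t

lemma cdf_eq (x : ℝ) : stdGaussianCDF x = I x / Real.sqrt (2 * π) := rfl

lemma I_nonneg (x : ℝ) : 0 ≤ I x :=
  setIntegral_nonneg measurableSet_Iic fun t _ => g_nonneg t

lemma I_mono {x y : ℝ} (h : x ≤ y) : I x ≤ I y :=
  setIntegral_mono_set g_int.integrableOn (Filter.Eventually.of_forall g_nonneg)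
    ((Iic_subset_Iic.mpr h).eventuallyLE)

lemma I_neg (x : ℝ) : I (-x) = Real.sqrt (2 * π) - I x := by
  have h1 : I (-x) = ∫ t in Set.Ioi x, g t := by
    have hgE : ∀ t : ℝ, g t = g (-t) := fun t => by rw [g, g]; ring_nf
    calc I (-x) = ∫ t in Set.Iic (-x), g (-t) := by
          rw [I]; exact setIntegral_congr_fun measurableSet_Iic fun t _ => hgE t
      _ = ∫ t in Set.Ioi (-(-x)), g t := integral_comp_neg_Iic _ _
      _ = _ := by rw [neg_neg]
  rw [h1, eq_sub_iff_add_eq, ← g_total, add_comm]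
  exact intervalIntegral.integral_Iic_add_Ioi g_int.integrableOn g_int.integrableOn

lemma I_zero : I 0 = Real.sqrt (2 * π) / 2 := by
  have := I_neg 0; rw [neg_zero] at this; linarith

/-- translation of an `Iic` integral of `g`. -/
lemma shift_Iic (c x : ℝ) : ∫ t in Set.Iic x, g (t + c) = I (x + c) := by
  have h := (measurePreserving_add_right volume c).setIntegral_preimage_emb
    (measurableEmbedding_addRight c) g (Set.Iic (x + c))
  have hpre : (fun y : ℝ => y + c) ⁻¹' Set.Iic (x + c) = Set.Iic x := by
    ext t; simp
  rw [hpre] at h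
  rw [I]; exact h

/-- Gaussian tail bound `Φ(-x) ≤ e^{-x²/2}/2` (times `√(2π)`). -/
lemma I_tail {x : ℝ} (hx : 0 ≤ x) :
    I (-x) ≤ Real.exp (-(x ^ 2) / 2) * (Real.sqrt (2 * π) / 2) := by
  have hint2 : Integrable fun t : ℝ => g (t + x) := by
    have := ((measurePreserving_add_right volume x).integrable_comp_emb
      (measurableEmbedding_addRight x) (g := g)).mpr g_int
    exact this
  calc I (-x) ≤ ∫ t in Set.Iic (-x), Real.exp (-(x ^ 2) / 2) * g (t + x) := by
        refine setIntegral_mono_on g_int.integrableOn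
          ((hint2.const_mul _).integrableOn) measurableSet_Iic fun t ht => ?_
        rw [g, g, ← Real.exp_add]
        apply Real.exp_le_exp.mpr
        have ht' : t ≤ -x := ht
        nlinarith [mul_nonneg hx (by linarith : 0 ≤ -x - t)]
    _ = Real.exp (-(x ^ 2) / 2) * I 0 := by
        rw [MeasureTheory.integral_const_mul, shift_Iic x (-x), neg_add_cancel]
    _ = _ := by rw [I_zero]

/-- for `0 ≤ W`, `I W ≤ I 0 + W`. -/
lemma I_le_I_zero_add {W : ℝ} (hW : 0 ≤ W) : I W ≤ I 0 + W := by
  have h1 : I W - I 0 = ∫ u in (0:ℝ)..W, g u := by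
    rw [I, I]
    exact intervalIntegral.integral_Iic_sub_Iic g_int.integrableOn g_int.integrableOn
  have h2 : ∫ u in (0:ℝ)..W, g u ≤ ∫ _u in (0:ℝ)..W, (1:ℝ) := by
    apply intervalIntegral.integral_mono_on hW
      (g_cont.intervalIntegrable _ _) intervalIntegrable_const
    exact fun u _ => g_le_one u
  rw [intervalIntegral.integral_const, smul_eq_mul, mul_one, sub_zero] at h2
  linarith

/-- The main region-splitting comparison. -/
lemma I_step {ε s t : ℝ} (hε : 0 < ε) (hc : 0 < t - s) :
    I t ≤ I ((t - s) / 2 - ε / (t - s)) + Real.exp ε * I s := by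
  set c : ℝ := t - s with hcdef
  set w : ℝ := c / 2 - ε / c with hwdef
  rcases le_or_gt t w with h | h
  · have h1 := I_mono h
    have h2 := mul_nonneg (Real.exp_pos ε).le (I_nonneg s)
    linarith
  · have hsplit : I t - I w = ∫ u in w..t, g u := by
      rw [I, I]
      exact intervalIntegral.integral_Iic_sub_Iic g_int.integrableOn g_int.integrableOn
    have key : ∫ u in w..t, g u ≤ Real.exp ε * I s := by
      have step1 : ∫ u in w..t, g u ≤ ∫ u in w..t, Real.exp ε * g (u - c) := by
        apply intervalIntegral.integral_mono_on h.le (g_cont.intervalIntegrable _ _)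
          ((show Continuous fun u : ℝ => Real.exp ε * g (u - c) from
            continuous_const.mul (g_cont.comp (continuous_sub_right c))).intervalIntegrable _ _)
        intro u hu
        clear_value w c
        have hwu : w ≤ u := hu.1
        simp only [g]
        rw [← Real.exp_add]
        apply Real.exp_le_exp.mpr
        have h1 : c * w ≤ c * u := mul_le_mul_of_nonneg_left hwu hc.le
        have h2 : c * w = c ^ 2 / 2 - ε := by
          rw [hwdef]; field_simp
        have h3 : (u - c) ^ 2 = u ^ 2 - 2 * (c * u) + c ^ 2 := by ring
        nlinarith
      have step2 : ∫ u in w..t, Real.exp ε * g (u - c) =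
          Real.exp ε * ∫ u in (w - c)..(t - c), g u := by
        rw [intervalIntegral.integral_const_mul, intervalIntegral.integral_comp_sub_right]
      have step3 : ∫ u in (w - c)..(t - c), g u ≤ I s := by
        rw [intervalIntegral.integral_of_le (by linarith)]
        have hts : t - c = s := by rw [hcdef]; ring
        calc ∫ u in Set.Ioc (w - c) (t - c), g u ≤ ∫ u in Set.Iic (t - c), g u := by
              apply setIntegral_mono_set g_int.integrableOn
                (Filter.Eventually.of_forall g_nonneg)
                ((Ioc_subset_Iic_self).eventuallyLE)
          _ = I s := by rw [hts, I]
      calc ∫ u in w..t, g u ≤ Real.exp ε * ∫ u in (w - c)..(t - c), g u := by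
            rw [← step2]; exact step1
        _ ≤ Real.exp ε * I s :=
            mul_le_mul_of_nonneg_left step3 (Real.exp_pos ε).le
    have := I_nonneg w
    linarith

lemma exp_fifth_le : Real.exp 0.2 ≤ 1.25 := by
  by_contra hcon
  push_neg at hcon
  have h5 : Real.exp 0.2 ^ (5 : ℕ) = Real.exp 1 := by
    rw [← Real.exp_nat_mul]; norm_num
  have hlt : (1.25 : ℝ) ^ (5 : ℕ) < Real.exp 0.2 ^ (5 : ℕ) :=
    pow_lt_pow_left₀ hcon (by norm_num) (by norm_num)
  rw [h5] at hlt
  have := Real.exp_one_lt_d9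
  norm_num at hlt
  linarith

lemma exp_quarter_le : Real.exp (1/4 : ℝ) ≤ 1.29 := by
  by_contra hcon
  push_neg at hcon
  have h4 : Real.exp (1/4 : ℝ) ^ (4 : ℕ) = Real.exp 1 := by
    rw [← Real.exp_nat_mul]; norm_num
  have hlt : (1.29 : ℝ) ^ (4 : ℕ) < Real.exp (1/4 : ℝ) ^ (4 : ℕ) :=
    pow_lt_pow_left₀ hcon (by norm_num) (by norm_num)
  rw [h4] at hlt
  have := Real.exp_one_lt_d9
  norm_num at hlt
  linarith

lemma half_le_log : (1/2 : ℝ) ≤ Real.log 2.5 := by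
  rw [Real.le_log_iff_exp_le (by norm_num)]
  by_contra hcon
  push_neg at hcon
  have h2 : Real.exp (1/2 : ℝ) ^ (2 : ℕ) = Real.exp 1 := by
    rw [← Real.exp_nat_mul]; norm_num
  have hlt : (2.5 : ℝ) ^ (2 : ℕ) < Real.exp (1/2 : ℝ) ^ (2 : ℕ) :=
    pow_lt_pow_left₀ hcon (by norm_num) (by norm_num)
  rw [h2] at hlt
  have := Real.exp_one_lt_d9
  norm_num at hlt
  linarith

lemma sqrt_two_pi_ge : (2.5 : ℝ) ≤ Real.sqrt (2 * π) := by
  rw [show (2.5 : ℝ) = Real.sqrt (2.5 ^ 2) by rw [Real.sqrt_sq (by norm_num)]]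
  apply Real.sqrt_le_sqrt
  nlinarith [Real.pi_gt_d6]

set_option maxHeartbeats 1000000 in
/-- The numeric heart: `I (c/2 - ε/c) ≤ δ √(2π)`. -/
lemma I_w_le {ε δ L c : ℝ} (hε0 : 0 < ε) (hε1 : ε < 1) (hδ0 : 0 < δ) (hδ1 : δ < 1)
    (hL : L = Real.log (1.25 / δ)) (hc0 : 0 < c) (hc : c ≤ ε / Real.sqrt (2 * L)) :
    I (c / 2 - ε / c) ≤ δ * Real.sqrt (2 * π) := by
  have hL0 : 0 < L := by
    rw [hL]; exact Real.log_pos ((one_lt_div hδ0).mpr (by linarith))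
  set r : ℝ := Real.sqrt (2 * L) with hrdef
  have hr0 : 0 < r := Real.sqrt_pos.mpr (by linarith)
  have hr2 : r ^ 2 = 2 * L := Real.sq_sqrt (by linarith)
  have hδeq : δ = 1.25 * Real.exp (-L) := by
    have hexp : Real.exp L = 1.25 / δ := by rw [hL, Real.exp_log (by positivity)]
    rw [Real.exp_neg, hexp]
    field_simp
  set w : ℝ := c / 2 - ε / c with hwdef
  set W : ℝ := 1 / (2 * r) - r with hWdef
  have hcr : c * r ≤ ε := by rwa [le_div_iff₀ hr0] at hc
  have h_ec : r ≤ ε / c := by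
    rw [le_div_iff₀ hc0]
    linarith [mul_comm c r]
  have hc1 : c ≤ 1 / r := by
    rw [le_div_iff₀ hr0]
    nlinarith
  have hwW : w ≤ W := by
    rw [hwdef, hWdef]
    have h1 : c / 2 ≤ 1 / (2 * r) := by
      rw [div_le_div_iff₀ (by norm_num) (by positivity)]
      nlinarith
    linarith
  rcases le_or_gt (1/4 : ℝ) L with hL4 | hL4
  · -- big-L case: Gaussian tail bound
    have hW0 : W ≤ 0 := by
      rw [hWdef, sub_nonpos, div_le_iff₀ (by positivity : (0:ℝ) < 2 * r)]
      nlinarith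
    have hIW := I_tail (x := -W) (by linarith)
    rw [neg_neg] at hIW
    have hIw : I w ≤ Real.exp (-((-W) ^ 2) / 2) * (Real.sqrt (2 * π) / 2) :=
      le_trans (I_mono hwW) hIW
    have hW2 : (-W) ^ 2 = 1 / (8 * L) - 1 + 2 * L := by
      have e1 : (-(1 / (2 * r) - r)) ^ 2 = 1 / (4 * r ^ 2) - 1 + r ^ 2 := by
        field_simp
        ring
      rw [hWdef, e1, hr2]
      ring_nf
    have hexpb : Real.exp (-((-W) ^ 2) / 2) ≤ 2.5 * Real.exp (-L) := by
      rw [show (2.5:ℝ) * Real.exp (-L) = Real.exp (Real.log 2.5 + -L) by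
        rw [Real.exp_add, Real.exp_log (by norm_num)]]
      apply Real.exp_le_exp.mpr
      rw [hW2]
      have h16 : (0:ℝ) < 16 * L := by linarith
      have he : -(1 / (8 * L) - 1 + 2 * L) / 2 = -(1 / (16 * L)) + 1/2 - L := by
        field_simp
        ring
      rw [he]
      have h1 := half_le_log
      have h2 : (0:ℝ) ≤ 1 / (16 * L) := by positivity
      linarith
    calc I w ≤ (2.5 * Real.exp (-L)) * (Real.sqrt (2 * π) / 2) :=
          le_trans hIw (mul_le_mul_of_nonneg_right hexpb (by positivity))
      _ = δ * Real.sqrt (2 * π) := by rw [hδeq]; ring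
  · -- small-L case: crude density bound
    have hLlb : (0.2:ℝ) ≤ L := by
      rw [hL]
      have h125 : (1.25:ℝ) ≤ 1.25 / δ := by
        rw [le_div_iff₀ hδ0]; nlinarith
      calc (0.2:ℝ) ≤ Real.log 1.25 := by
            rw [Real.le_log_iff_exp_le (by norm_num)]
            exact exp_fifth_le
        _ ≤ Real.log (1.25 / δ) := Real.log_le_log (by norm_num) h125
    have hr063 : (0.63:ℝ) ≤ r := by
      rw [hrdef, Real.le_sqrt (by norm_num) (by linarith)]
      nlinarith
    have hW0 : 0 ≤ W := by
      rw [hWdef, sub_nonneg, le_div_iff₀ (by positivity : (0:ℝ) < 2 * r)]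
      nlinarith
    have hWub : W ≤ 0.794 := by
      have h1 : 1 / (2 * r) ≤ 1 / (2 * 0.63) := by
        apply one_div_le_one_div_of_le (by norm_num)
        linarith
      have h2 : (1:ℝ) / (2 * 0.63) ≤ 0.794 := by norm_num
      rw [hWdef]
      linarith
    have hδlb : (0.96:ℝ) ≤ δ := by
      rw [hδeq]
      have h1 : Real.exp (-(1/4:ℝ)) ≤ Real.exp (-L) :=
        Real.exp_le_exp.mpr (by linarith)
      have h2 : (1:ℝ) / 1.29 ≤ 1 / Real.exp (1/4:ℝ) :=
        one_div_le_one_div_of_le (Real.exp_pos _) exp_quarter_le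
      have h3 : Real.exp (-(1/4:ℝ)) = 1 / Real.exp (1/4:ℝ) := by
        rw [Real.exp_neg]
        exact (one_div _).symm
      nlinarith
    have hIw : I w ≤ Real.sqrt (2 * π) / 2 + 0.794 := by
      have h1 := I_le_I_zero_add hW0
      rw [I_zero] at h1
      linarith [I_mono hwW]
    have hsq := sqrt_two_pi_ge
    have hp : 0.96 * Real.sqrt (2 * π) ≤ δ * Real.sqrt (2 * π) :=
      mul_le_mul_of_nonneg_right hδlb (Real.sqrt_nonneg _)
    linarith

set_option maxHeartbeats 1000000 in
/-- one-sided main inequality. -/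
lemma main (ε δ : ℝ) (hε : ε ∈ Set.Ioo (0 : ℝ) 1) (hδ : δ ∈ Set.Ioo (0 : ℝ) 1)
    (Δ : ℝ) (hΔ : 0 < Δ)
    (σ : ℝ) (hσ : σ = Δ / ε * Real.sqrt (2 * Real.log (1.25 / δ)))
    (a b : ℝ) (hab : |a - b| ≤ Δ) :
    stdGaussianCDF (a / σ) ≤ Real.exp ε * stdGaussianCDF (b / σ) + δ := by
  obtain ⟨hε0, hε1⟩ := hε
  obtain ⟨hδ0, hδ1⟩ := hδ
  set L : ℝ := Real.log (1.25 / δ) with hL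
  have hL0 : 0 < L := Real.log_pos ((one_lt_div hδ0).mpr (by linarith))
  have hr0 : 0 < Real.sqrt (2 * L) := Real.sqrt_pos.mpr (by linarith)
  have hσ0 : 0 < σ := by rw [hσ]; positivity
  have hπ : 0 < Real.sqrt (2 * π) := Real.sqrt_pos.mpr (by positivity)
  rw [cdf_eq, cdf_eq]
  set t : ℝ := a / σ
  set s : ℝ := b / σ
  rcases le_or_gt t s with hts | hts
  · have h1 := I_mono hts
    have hIs := I_nonneg s
    have hexp1 : 1 ≤ Real.exp ε := by
      rw [← Real.exp_zero]; exact Real.exp_le_exp.mpr hε0.le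
    have h2 : I t / Real.sqrt (2 * π) ≤ I s / Real.sqrt (2 * π) := by gcongr
    have h3 : 0 ≤ I s / Real.sqrt (2 * π) := by positivity
    nlinarith
  · have hc0 : 0 < t - s := by linarith
    have hcΔ : t - s ≤ ε / Real.sqrt (2 * L) := by
      have h1 : t - s = (a - b) / σ := div_sub_div_same a b σ
      have h2 : (a - b) / σ ≤ Δ / σ := by
        gcongr
        exact le_of_abs_le hab
      have h3 : Δ / σ = ε / Real.sqrt (2 * L) := by
        rw [hσ, div_eq_div_iff (by positivity) hr0.ne']
        field_simp
      rw [h1]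
      linarith
    have hstep := I_step (ε := ε) (s := s) (t := t) hε0 hc0
    have hw := I_w_le hε0 hε1 hδ0 hδ1 hL hc0 hcΔ
    rw [div_le_iff₀ hπ]
    have hexpand : (Real.exp ε * (I s / Real.sqrt (2 * π)) + δ) * Real.sqrt (2 * π)
        = Real.exp ε * I s + δ * Real.sqrt (2 * π) := by
      field_simp
    rw [hexpand]
    linarith

lemma one_sub (x : ℝ) : stdGaussianCDF (-x) = 1 - stdGaussianCDF x := by
  have hπ : 0 < Real.sqrt (2 * π) := Real.sqrt_pos.mpr (by positivity)
  rw [cdf_eq, cdf_eq, I_neg]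
  field_simp

end StmtAux

/-- Scalar `(ε,δ)`-differential privacy of the `dp-sign` compressor:
with `σ = (Δ/ε)·√(2 ln(1.25/δ))`, for all `a, b` with `|a - b| ≤ Δ`,
`Φ(a/σ) ≤ e^ε Φ(b/σ) + δ` and `1 - Φ(a/σ) ≤ e^ε (1 - Φ(b/σ)) + δ`. -/
theorem stmt_3 (ε δ : ℝ) (hε : ε ∈ Set.Ioo (0 : ℝ) 1) (hδ : δ ∈ Set.Ioo (0 : ℝ) 1)
    (Δ : ℝ) (hΔ : 0 < Δ)
    (σ : ℝ) (hσ : σ = Δ / ε * Real.sqrt (2 * Real.log (1.25 / δ)))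
    (a b : ℝ) (hab : |a - b| ≤ Δ) :
    stdGaussianCDF (a / σ) ≤ Real.exp ε * stdGaussianCDF (b / σ) + δ ∧
    1 - stdGaussianCDF (a / σ) ≤ Real.exp ε * (1 - stdGaussianCDF (b / σ)) + δ := by
  constructor
  · exact StmtAux.main ε δ hε hδ Δ hΔ σ hσ a b hab
  · have key := StmtAux.main ε δ hε hδ Δ hΔ σ hσ (-a) (-b)
      (by rw [show -a - -b = -(a - b) by ring, abs_neg]; exact hab)
    rw [← StmtAux.one_sub (a / σ), ← StmtAux.one_sub (b / σ), ← neg_div, ← neg_div]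
    exact key
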